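/- Let l, d, m, α, β be real numbers with l ≥ 0, d > 0, m > 0, 2·l·m ≤ d², α ≥ 0, and β ≠ 0, and set λ := α + β·i ∈ ℂ. Then |l + λ·d + λ²·m| > l. In particular, the complex number l + λd + λ²m is nonzero. -/

import Mathlib

/-- The key scalar inequality behind the stability certificate:
if `l ≥ 0`, `d > 0`, `m > 0`, `2lm ≤ d²`, `α ≥ 0`, `β ≠ 0` and `λ = α + βi`, then
`|l + λd + λ²m| > l`; in particular `l + λd + λ²m ≠ 0`. -/
theorem scalar_pencil_modulus_gt
    (l d m α β : ℝ) (hl : 0 ≤ l) (hd : 0 < d) (hm : 0 < m)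
    (hC : 2 * l * m ≤ d ^ 2) (hα : 0 ≤ α) (hβ : β ≠ 0)
    (lam : ℂ) (hlam : lam = (α : ℂ) + (β : ℂ) * Complex.I) :
    l < ‖(l : ℂ) + lam * d + lam ^ 2 * m‖ ∧
      (l : ℂ) + lam * d + lam ^ 2 * m ≠ 0 := by
  set z : ℂ := (l : ℂ) + lam * d + lam ^ 2 * m with hz
  have hre : z.re = l + α * d + (α ^ 2 - β ^ 2) * m := by
    rw [hz, hlam]
    simp only [pow_two, Complex.add_re, Complex.mul_re, Complex.mul_im, Complex.add_im,
      Complex.ofReal_re, Complex.ofReal_im, Complex.I_re, Complex.I_im]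
    ring
  have him : z.im = β * d + 2 * α * β * m := by
    rw [hz, hlam]
    simp only [pow_two, Complex.add_re, Complex.mul_re, Complex.mul_im, Complex.add_im,
      Complex.ofReal_re, Complex.ofReal_im, Complex.I_re, Complex.I_im]
    ring
  have hb2 : 0 < β ^ 2 := by positivity
  have hstrict : 0 < (α * d + (α ^ 2 - β ^ 2) * m) ^ 2 + 4 * α ^ 2 * β ^ 2 * m ^ 2 := by
    rcases eq_or_lt_of_le hα with h0 | h0
    · rw [← h0]; ring_nf; positivity
    · positivity
  have key : l ^ 2 < z.re ^ 2 + z.im ^ 2 := by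
    rw [hre, him]
    nlinarith [mul_nonneg hb2.le (sub_nonneg.2 hC), hstrict,
      mul_nonneg hl (mul_nonneg hα hd.le),
      mul_nonneg hl (mul_nonneg (mul_nonneg hα hα) hm.le),
      mul_nonneg (mul_nonneg hα hb2.le) (mul_nonneg hm.le hd.le)]
  have habs2 : (‖z‖) ^ 2 = z.re ^ 2 + z.im ^ 2 := by
    rw [Complex.sq_norm, Complex.normSq_apply]; ring
  have h1 : l < ‖z‖ := by
    have h := norm_nonneg z
    nlinarith [habs2, key]
  exact ⟨h1, fun h0 => by simp [h0] at h1; linarith [h1]⟩
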